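/- arXiv:2008.06213 — 2 statements merged into one kernel-verified Lean document; each statement's English description precedes it below -/
import Mathlib

section
/- Under the prior π(γ) = B(|γ|+1, p+q−|γ|+1) / 2^{#{j : γ_j^x > 0}}, for each fixed index j with 1 ≤ j ≤ p, the marginal probability that γ_j^x = 0 equals 1/2; that is, the sum of π(γ) over all configurations γ with γ_j^x = 0 equals 1/2. -/
open Finset

/-- The Beta function `B(a,b) = ∫₀¹ t^(a-1) (1-t)^(b-1) dt`. -/
noncomputable def Beta (a b : ℝ) : ℝ :=
  ∫ t in (0:ℝ)..1, t ^ (a - 1) * (1 - t) ^ (b - 1)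

/-- Number of active (nonzero) components of `γˣ`, i.e. `#{j : γⱼˣ > 0}`. -/
def nActive {p : ℕ} (γx : Fin p → Fin 3) : ℕ :=
  (univ.filter fun j => 0 < (γx j : ℕ)).card

/-- The number of included predictors `|γ| = #{j : γⱼˣ > 0} + ∑ₖ γₖᶻ`. -/
def gammaSize {p q : ℕ} (γ : (Fin p → Fin 3) × (Fin q → Fin 2)) : ℕ :=
  nActive γ.1 + ∑ k, (γ.2 k : ℕ)

/-- The prior `π(γ) = B(|γ|+1, p+q-|γ|+1) / 2^{#{j : γⱼˣ > 0}}`. -/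
noncomputable def prior (p q : ℕ) (γ : (Fin p → Fin 3) × (Fin q → Fin 2)) : ℝ :=
  Beta ((gammaSize γ : ℝ) + 1) ((p : ℝ) + (q : ℝ) - (gammaSize γ : ℝ) + 1) /
    2 ^ nActive γ.1

-- per-coordinate weights
noncomputable def gw (t : ℝ) (v : Fin 3) : ℝ := if v = 0 then 1 - t else t / 2
noncomputable def hw (t : ℝ) (v : Fin 2) : ℝ := if v = 0 then 1 - t else t

lemma Beta_nat (k m : ℕ) :
    Beta ((k : ℝ) + 1) ((m : ℝ) + 1) = ∫ t in (0:ℝ)..1, t ^ k * (1 - t) ^ m := by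
  unfold Beta
  refine intervalIntegral.integral_congr fun t _ => ?_
  rw [add_sub_cancel_right, add_sub_cancel_right, Real.rpow_natCast, Real.rpow_natCast]

lemma nActive_le {p : ℕ} (γx : Fin p → Fin 3) : nActive γx ≤ p := by
  rw [nActive]
  exact le_trans (card_filter_le _ _) (by simp)

lemma zsum_le {q : ℕ} (γz : Fin q → Fin 2) : ∑ k, (γz k : ℕ) ≤ q := by
  calc ∑ k, (γz k : ℕ) ≤ ∑ _k : Fin q, 1 :=
        Finset.sum_le_sum fun k _ => Nat.lt_succ_iff.mp (γz k).2
    _ = q := by simp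

lemma prod_gw {p : ℕ} (t : ℝ) (γx : Fin p → Fin 3) :
    ∏ i, gw t (γx i) = (t / 2) ^ nActive γx * (1 - t) ^ (p - nActive γx) := by
  classical
  rw [← Finset.prod_filter_mul_prod_filter_not univ (fun i => 0 < (γx i : ℕ))]
  have h1 : ∀ i ∈ univ.filter (fun i => 0 < (γx i : ℕ)), gw t (γx i) = t / 2 := by
    intro i hi
    simp only [mem_filter] at hi
    have : γx i ≠ 0 := by
      intro h; rw [h] at hi; simp at hi
    simp [gw, this]
  have h2 : ∀ i ∈ univ.filter (fun i => ¬ 0 < (γx i : ℕ)), gw t (γx i) = 1 - t := by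
    intro i hi
    simp only [mem_filter] at hi
    have hv : (γx i : ℕ) = 0 := by omega
    have : γx i = 0 := by
      apply Fin.ext; simpa using hv
    simp [gw, this]
  have hc1 : (univ.filter (fun i => 0 < (γx i : ℕ))).card = nActive γx := rfl
  have hc2 : (univ.filter (fun i => ¬ 0 < (γx i : ℕ))).card = p - nActive γx := by
    have := Finset.card_filter_add_card_filter_not
      (s := (univ : Finset (Fin p))) (p := fun i => 0 < (γx i : ℕ))
    simp only [card_univ, Fintype.card_fin] at this
    rw [nActive]
    omega
  rw [Finset.prod_congr rfl h1, Finset.prod_congr rfl h2, prod_const, prod_const,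
    hc1, hc2]

lemma prod_hw {q : ℕ} (t : ℝ) (γz : Fin q → Fin 2) :
    ∏ k, hw t (γz k) = t ^ (∑ k, (γz k : ℕ)) * (1 - t) ^ (q - ∑ k, (γz k : ℕ)) := by
  classical
  rw [← Finset.prod_filter_mul_prod_filter_not univ (fun k => γz k = 0)]
  have h1 : ∀ k ∈ univ.filter (fun k => γz k = 0), hw t (γz k) = 1 - t := by
    intro k hk; simp only [mem_filter] at hk; simp [hw, hk.2]
  have h2 : ∀ k ∈ univ.filter (fun k => ¬ γz k = 0), hw t (γz k) = t := by
    intro k hk; simp only [mem_filter] at hk; simp [hw, hk.2]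
  have hcard : (univ.filter (fun k => ¬ γz k = 0)).card = ∑ k, (γz k : ℕ) := by
    rw [Finset.card_filter]
    refine Finset.sum_congr rfl fun k _ => ?_
    rcases Fin.exists_fin_two.mp ⟨γz k, rfl⟩ with h | h <;> simp [h]
  have hcard2 : (univ.filter (fun k => γz k = 0)).card = q - ∑ k, (γz k : ℕ) := by
    have := Finset.card_filter_add_card_filter_not
      (s := (univ : Finset (Fin q))) (p := fun k => γz k = 0)
    simp only [card_univ, Fintype.card_fin] at this
    omega
  rw [Finset.prod_congr rfl h1, Finset.prod_congr rfl h2, prod_const, prod_const,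
    hcard, hcard2]
  ring

lemma prior_eq_integral (p q : ℕ) (γ : (Fin p → Fin 3) × (Fin q → Fin 2)) :
    prior p q γ = ∫ t in (0:ℝ)..1, (∏ i, gw t (γ.1 i)) * ∏ k, hw t (γ.2 k) := by
  have ha := nActive_le γ.1
  have hs := zsum_le γ.2
  have hle : gammaSize γ ≤ p + q := by
    unfold gammaSize; omega
  have h2 : ((p : ℝ) + q - gammaSize γ + 1) = ((p + q - gammaSize γ : ℕ) : ℝ) + 1 := by
    push_cast [Nat.cast_sub hle]; ring
  rw [prior, h2, Beta_nat, ← intervalIntegral.integral_div]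
  refine intervalIntegral.integral_congr fun t _ => ?_
  rw [prod_gw, prod_hw]
  have e1 : p + q - gammaSize γ = (p - nActive γ.1) + (q - ∑ k, ((γ.2 k : ℕ))) := by
    unfold gammaSize; omega
  rw [e1]
  unfold gammaSize
  rw [pow_add, pow_add]
  have : (t / 2) ^ nActive γ.1 = t ^ nActive γ.1 / 2 ^ nActive γ.1 := div_pow t 2 _
  rw [this]
  ring

lemma key_sum (p q : ℕ) (j : Fin p) (t : ℝ) :
    ∑ γ ∈ univ.filter (fun γ : (Fin p → Fin 3) × (Fin q → Fin 2) => γ.1 j = 0),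
      ((∏ i, gw t (γ.1 i)) * ∏ k, hw t (γ.2 k)) = 1 - t := by
  classical
  set F : Fin p → Fin 3 → ℝ := fun i v =>
    if i = j then (if v = 0 then 1 - t else 0) else gw t v with hF
  have step1 : ∑ γ ∈ univ.filter (fun γ : (Fin p → Fin 3) × (Fin q → Fin 2) => γ.1 j = 0),
      ((∏ i, gw t (γ.1 i)) * ∏ k, hw t (γ.2 k))
      = ∑ γ : (Fin p → Fin 3) × (Fin q → Fin 2),
          ((∏ i, F i (γ.1 i)) * ∏ k, hw t (γ.2 k)) := by
    rw [Finset.sum_filter]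
    refine Finset.sum_congr rfl fun γ _ => ?_
    by_cases h : γ.1 j = 0
    · rw [if_pos h]
      congr 1
      refine Finset.prod_congr rfl fun i _ => ?_
      by_cases hij : i = j
      · subst hij; simp [hF, h, gw]
      · simp [hF, hij]
    · rw [if_neg h]
      have : ∏ i, F i (γ.1 i) = 0 :=
        Finset.prod_eq_zero (mem_univ j) (by simp [hF, h])
      rw [this, zero_mul]
  rw [step1, Fintype.sum_prod_type]
  simp only [← Finset.sum_mul, ← Finset.mul_sum]
  have hx : ∑ f : Fin p → Fin 3, ∏ i, F i (f i) = 1 - t := by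
    rw [← Fintype.prod_sum]
    rw [Finset.prod_eq_single j]
    · simp [hF, Fin.sum_univ_three]
    · intro i _ hij
      simp [hF, hij, gw, Fin.sum_univ_three]
      ring
    · simp
  have hz : ∑ f : Fin q → Fin 2, ∏ k, hw t (f k) = 1 := by
    rw [← Fintype.prod_sum]
    have : ∀ k : Fin q, ∑ v : Fin 2, hw t v = 1 := by
      intro k; simp [hw, Fin.sum_univ_two]
    rw [Finset.prod_congr rfl (fun k _ => this k)]
    simp
  rw [hx, hz, mul_one]

/-- For each fixed index `j`, the marginal probability that `γⱼˣ = 0` equals `1/2`. -/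
theorem prior_marginal_x_zero (p q : ℕ) (hp : 1 ≤ p) (j : Fin p) :
    ∑ γ ∈ univ.filter (fun γ : (Fin p → Fin 3) × (Fin q → Fin 2) => γ.1 j = 0),
      prior p q γ = 1 / 2 := by
  classical
  have hint : ∀ γ : (Fin p → Fin 3) × (Fin q → Fin 2),
      IntervalIntegrable (fun t => (∏ i, gw t (γ.1 i)) * ∏ k, hw t (γ.2 k))
        MeasureTheory.volume 0 1 := by
    intro γ
    apply Continuous.intervalIntegrable
    apply Continuous.mul
    · apply continuous_finset_prod
      intro i _
      unfold gw
      split <;> fun_prop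
    · apply continuous_finset_prod
      intro k _
      unfold hw
      split <;> fun_prop
  calc ∑ γ ∈ univ.filter (fun γ : (Fin p → Fin 3) × (Fin q → Fin 2) => γ.1 j = 0),
        prior p q γ
      = ∑ γ ∈ univ.filter (fun γ : (Fin p → Fin 3) × (Fin q → Fin 2) => γ.1 j = 0),
          ∫ t in (0:ℝ)..1, (∏ i, gw t (γ.1 i)) * ∏ k, hw t (γ.2 k) :=
        Finset.sum_congr rfl fun γ _ => prior_eq_integral p q γ
    _ = ∫ t in (0:ℝ)..1, ∑ γ ∈ univ.filter
          (fun γ : (Fin p → Fin 3) × (Fin q → Fin 2) => γ.1 j = 0),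
          (∏ i, gw t (γ.1 i)) * ∏ k, hw t (γ.2 k) :=
        (intervalIntegral.integral_finset_sum fun γ _ => hint γ).symm
    _ = ∫ t in (0:ℝ)..1, (1 - t) :=
        intervalIntegral.integral_congr fun t _ => key_sum p q j t
    _ = 1 / 2 := by
        rw [intervalIntegral.integral_sub intervalIntegrable_const
          (intervalIntegral.intervalIntegrable_id)]
        simp
        norm_num
end

section
/- Under the prior π(γ) = B(|γ|+1, p+q−|γ|+1) / 2^{#{j : γ_j^x > 0}}, for each fixed index k with 1 ≤ k ≤ q, the marginal probabilities satisfy Pr(γ_k^z = 0) = Pr(γ_k^z = 1) = 1/2; that is, the sum of π(γ) over all configurations γ with γ_k^z = 0 equals 1/2, and the sum over all configurations with γ_k^z = 1 equals 1/2. -/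
open Finset

lemma fact_mul_prod (s : ℕ) : ∀ n : ℕ, (Nat.factorial s) * ∏ j ∈ range n, (s + 1 + j) = (Nat.factorial (s+n)) := by
  intro n; induction n with
  | zero => simp
  | succ n ih =>
    rw [prod_range_succ, ← mul_assoc, ih]
    rw [show s + (n+1) = (s + n) + 1 by ring, Nat.factorial_succ]
    ring

lemma Beta_nat_s3 (s m : ℕ) : Beta (s + 1) (m + 1) = (Nat.factorial s) * (Nat.factorial m) / (Nat.factorial (s+m+1)) := by
  have h1 : Beta (s + 1) (m + 1) = ∫ t in (0:ℝ)..1, t ^ s * (1 - t) ^ m := by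
    unfold Beta
    congr 1
    ext t
    rw [add_sub_cancel_right, add_sub_cancel_right, Real.rpow_natCast, Real.rpow_natCast]
  have h2 : Complex.betaIntegral (s + 1) (m + 1) =
      ((∫ t in (0:ℝ)..1, t ^ s * (1 - t) ^ m : ℝ) : ℂ) := by
    rw [Complex.betaIntegral, ← intervalIntegral.integral_ofReal]
    congr 1
    ext t
    push_cast
    rw [add_sub_cancel_right, add_sub_cancel_right, Complex.cpow_natCast, Complex.cpow_natCast]
  have h3 : Complex.betaIntegral (s + 1) (m + 1) = (((Nat.factorial s) * (Nat.factorial m) / (Nat.factorial (s+m+1)) : ℝ) : ℂ) := by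
    rw [Complex.betaIntegral_eval_nat_add_one_right (by simp; positivity) m]
    have hp := fact_mul_prod s (m + 1)
    have hs : (((Nat.factorial s) : ℂ)) ≠ 0 := by exact_mod_cast Nat.factorial_ne_zero s
    have hprod : (((Nat.factorial s) : ℂ)) * ∏ j ∈ range (m + 1), ((s : ℂ) + 1 + j) = ((Nat.factorial (s+m+1)) : ℂ) := by
      exact_mod_cast congrArg (Nat.cast (R := ℂ)) (hp.trans (by rw [show s + (m+1) = s + m + 1 by ring]))
    push_cast
    rw [div_eq_div_iff]
    · rw [← hprod]; ring
    · intro h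
      rw [h, mul_zero] at hprod
      exact Nat.cast_ne_zero.mpr (Nat.factorial_ne_zero (s+m+1)) hprod.symm
    · exact_mod_cast Nat.factorial_ne_zero (s + m + 1)
  rw [h1]
  exact_mod_cast h2.symm.trans h3

noncomputable def T (n : ℕ) (g : ℕ → ℝ) : ℝ := ∑ s ∈ range (n+1), (n.choose s : ℝ) * g s

lemma T_succ (n : ℕ) (g : ℕ → ℝ) : T (n+1) g = T n g + T n (fun s => g (s+1)) := by
  unfold T
  rw [Finset.sum_range_succ' (fun s => ((n+1).choose s : ℝ) * g s)]
  simp only [Nat.choose_succ_succ, Nat.choose_zero_right]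
  push_cast
  simp only [add_mul]
  rw [Finset.sum_add_distrib]
  have h0 : ∑ i ∈ range (n+1), (n.choose (i+1) : ℝ) * g (i+1)
      = ∑ i ∈ range n, (n.choose (i+1) : ℝ) * g (i+1) := by
    rw [Finset.sum_range_succ]; simp
  have h1 : (∑ i ∈ range n, (n.choose (i+1) : ℝ) * g (i+1)) + (n.choose 0 : ℝ) * g 0
      = ∑ s ∈ range (n+1), (n.choose s : ℝ) * g s :=
    (Finset.sum_range_succ' (fun s => (n.choose s : ℝ) * g s) n).symm
  simp only [Nat.choose_zero_right] at h1
  push_cast at h1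
  linarith


lemma nActive_eq_sum {p : ℕ} (f : Fin p → Fin 3) :
    nActive f = ∑ j, if 0 < (f j : ℕ) then 1 else 0 := by
  rw [nActive, Finset.card_filter]

lemma nActive_cons {p : ℕ} (v : Fin 3) (f : Fin p → Fin 3) :
    nActive (Fin.cons v f) = (if 0 < (v : ℕ) then 1 else 0) + nActive f := by
  rw [nActive_eq_sum, nActive_eq_sum, Fin.sum_univ_succ]
  simp

lemma Xsum (p : ℕ) (g : ℕ → ℝ) :
    ∑ f : Fin p → Fin 3, g (nActive f) / 2 ^ (nActive f) = T p g := by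
  induction p generalizing g with
  | zero =>
    rw [Fintype.sum_unique]
    simp [nActive, T]
  | succ p ih =>
    rw [← (Fin.consEquiv (fun _ : Fin (p+1) => Fin 3)).sum_comp
        (fun f => g (nActive f) / 2 ^ (nActive f))]
    rw [Fintype.sum_prod_type]
    simp only [show ∀ (v : Fin 3) (f : Fin p → Fin 3),
        (Fin.consEquiv fun _ : Fin (p+1) => Fin 3) (v, f) = Fin.cons v f from fun _ _ => rfl,
      nActive_cons]
    rw [Fin.sum_univ_three]
    norm_num
    rw [T_succ]
    calc (∑ f : Fin p → Fin 3, g (nActive f) / 2 ^ nActive f)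
          + (∑ f : Fin p → Fin 3, g (1 + nActive f) / 2 ^ (1 + nActive f))
          + (∑ f : Fin p → Fin 3, g (1 + nActive f) / 2 ^ (1 + nActive f))
        = T p g + (T p (fun s => g (1+s) / 2) + T p (fun s => g (1+s) / 2)) := by
          rw [ih g]
          have h1 : ∀ f : Fin p → Fin 3, g (1 + nActive f) / 2 ^ (1 + nActive f)
              = (fun s => g (1 + s) / 2) (nActive f) / 2 ^ (nActive f) := by
            intro f; rw [pow_add]; ring
          simp_rw [h1]
          rw [ih (fun s => g (1+s) / 2)]
          ring
      _ = T p g + T p (fun s => g (s+1)) := by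
          unfold T
          rw [← Finset.sum_add_distrib]
          congr 1
          apply Finset.sum_congr rfl
          intro s _
          beta_reduce
          rw [add_comm 1 s]
          ring

lemma T_congr {n : ℕ} {f h : ℕ → ℝ} (e : ∀ s, f s = h s) : T n f = T n h := by
  unfold T; exact Finset.sum_congr rfl fun s _ => by rw [e s]

lemma T_comp (p q : ℕ) (g : ℕ → ℝ) :
    T p (fun a => T q (fun z => g (a + z))) = T (p + q) g := by
  induction p generalizing g with
  | zero =>
    unfold T
    simp
  | succ p ih =>
    rw [T_succ]
    have e1 : T p (fun s => (fun a => T q (fun z => g (a + z))) (s+1))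
        = T p (fun s => T q (fun z => (fun m => g (m+1)) (s + z))) := by
      apply T_congr; intro s; beta_reduce; apply T_congr; intro z
      congr 1; omega
    rw [e1, ih g, ih (fun m => g (m+1)), ← T_succ]
    congr 1
    omega

lemma Zsum (q : ℕ) (g : ℕ → ℝ) :
    ∑ f : Fin q → Fin 2, g (∑ j, (f j : ℕ)) = T q g := by
  induction q generalizing g with
  | zero => rw [Fintype.sum_unique]; simp [T]
  | succ q ih =>
    rw [← (Fin.consEquiv (fun _ : Fin (q+1) => Fin 2)).sum_comp
        (fun f => g (∑ j, (f j : ℕ)))]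
    rw [Fintype.sum_prod_type]
    simp only [show ∀ (v : Fin 2) (f : Fin q → Fin 2),
        (Fin.consEquiv fun _ : Fin (q+1) => Fin 2) (v, f) = Fin.cons v f from fun _ _ => rfl]
    simp only [Fin.sum_univ_succ, Fin.cons_zero, Fin.cons_succ, Finset.univ_eq_empty,
      Finset.sum_empty, add_zero, Fin.val_zero, Fin.val_succ, zero_add]
    rw [ih g, T_succ]
    congr 1
    rw [← ih (fun s => g (s+1))]
    apply Finset.sum_congr rfl
    intro f _
    congr 1
    omega

lemma Zsum_if (q : ℕ) (k : Fin (q+1)) (c : Fin 2) (g : ℕ → ℝ) :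
    ∑ f : Fin (q+1) → Fin 2, (if f k = c then g (∑ j, (f j : ℕ)) else 0)
      = T q (fun s => g (s + (c : ℕ))) := by
  classical
  set σ := Equiv.swap (0 : Fin (q+1)) k with hσ
  rw [← Equiv.sum_comp (Equiv.arrowCongr σ.symm (Equiv.refl (Fin 2)))
      (fun f => if f k = c then g (∑ j, (f j : ℕ)) else 0)]
  have happ : ∀ f : Fin (q+1) → Fin 2,
      (Equiv.arrowCongr σ.symm (Equiv.refl (Fin 2))) f = f ∘ σ := by
    intro f; funext j; simp [Equiv.arrowCongr, hσ]
  simp only [happ]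
  have hk : ∀ f : Fin (q+1) → Fin 2, (f ∘ σ) k = f 0 := by
    intro f; simp [hσ, Function.comp, Equiv.swap_apply_right]
  have hsum : ∀ f : Fin (q+1) → Fin 2, ∑ j, ((f ∘ σ) j : ℕ) = ∑ j, (f j : ℕ) :=
    fun f => Equiv.sum_comp σ (fun j => (f j : ℕ))
  simp only [hk, hsum]
  rw [← (Fin.consEquiv (fun _ : Fin (q+1) => Fin 2)).sum_comp
      (fun f => if f 0 = c then g (∑ j, (f j : ℕ)) else 0)]
  rw [Fintype.sum_prod_type]
  simp only [show ∀ (v : Fin 2) (f : Fin q → Fin 2),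
      (Fin.consEquiv fun _ : Fin (q+1) => Fin 2) (v, f) = Fin.cons v f from fun _ _ => rfl]
  simp only [Fin.sum_univ_succ, Fin.cons_zero, Fin.cons_succ, Finset.univ_eq_empty,
    Finset.sum_empty, add_zero, Fin.val_zero, Fin.val_succ, zero_add]
  fin_cases c
  · norm_num
    exact Zsum q (fun s => g s)
  · norm_num
    rw [← Zsum q (fun s => g (s + 1))]
    apply Finset.sum_congr rfl
    intro f _
    congr 1
    omega

lemma term0 (n s : ℕ) (hs : s ≤ n) :
    (n.choose s : ℝ) * Beta ((s:ℝ) + 1) (((n:ℝ) + 1) - s + 1)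
      = ((n+1-s : ℕ) : ℝ) * (Nat.factorial n) / (Nat.factorial (n+2)) := by
  have h1 : ((n:ℝ) + 1) - s + 1 = ((n+1-s : ℕ) : ℝ) + 1 := by
    have h : s ≤ n + 1 := by omega
    push_cast [h]
    ring
  rw [h1, Beta_nat_s3]
  have h4 : s + (n+1-s) + 1 = n + 2 := by omega
  rw [h4]
  have hnat : n.choose s * (Nat.factorial s * Nat.factorial (n+1-s))
      = (n+1-s) * Nat.factorial n := by
    have h2 : n + 1 - s = (n - s) + 1 := by omega
    rw [h2, Nat.factorial_succ]
    have h3 := Nat.choose_mul_factorial_mul_factorial hs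
    calc n.choose s * (Nat.factorial s * ((n-s+1) * Nat.factorial (n-s)))
        = (n-s+1) * (n.choose s * Nat.factorial s * Nat.factorial (n-s)) := by ring
      _ = (n-s+1) * Nat.factorial n := by rw [h3]
  rw [← mul_div_assoc]
  congr 1
  exact_mod_cast hnat

lemma term1 (n s : ℕ) (hs : s ≤ n) :
    (n.choose s : ℝ) * Beta (((s+1 : ℕ):ℝ) + 1) (((n:ℝ) + 1) - ((s+1 : ℕ):ℝ) + 1)
      = ((s+1 : ℕ) : ℝ) * (Nat.factorial n) / (Nat.factorial (n+2)) := by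
  have h1 : ((n:ℝ) + 1) - ((s+1:ℕ):ℝ) + 1 = ((n-s : ℕ) : ℝ) + 1 := by
    push_cast [hs]
    ring
  rw [h1, Beta_nat_s3]
  have h4 : (s+1) + (n-s) + 1 = n + 2 := by omega
  rw [h4]
  have hnat : n.choose s * (Nat.factorial (s+1) * Nat.factorial (n-s))
      = (s+1) * Nat.factorial n := by
    rw [Nat.factorial_succ]
    have h3 := Nat.choose_mul_factorial_mul_factorial hs
    calc n.choose s * ((s+1) * Nat.factorial s * Nat.factorial (n-s))
        = (s+1) * (n.choose s * Nat.factorial s * Nat.factorial (n-s)) := by ring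
      _ = (s+1) * Nat.factorial n := by rw [h3]
  rw [← mul_div_assoc]
  congr 1
  exact_mod_cast hnat

lemma castGauss (n : ℕ) : ∑ s ∈ range (n+1), (s:ℝ) = n * (n+1) / 2 := by
  have := Finset.sum_range_id_mul_two (n+1)
  have h2 : ((∑ i ∈ range (n+1), i : ℕ) : ℝ) * 2 = (n+1) * n := by exact_mod_cast this
  push_cast at h2
  linarith

lemma final_aux (n : ℕ) (c : ℕ → ℝ)
    (hc : ∑ s ∈ range (n+1), c s = ((n:ℝ)+1) * ((n:ℝ)+2) / 2) :
    ∑ s ∈ range (n+1), c s * (Nat.factorial n) / (Nat.factorial (n+2)) = 1/2 := by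
  have hfac : ((Nat.factorial (n+2) : ℕ) : ℝ)
      = ((n:ℝ)+2) * ((n:ℝ)+1) * (Nat.factorial n) := by
    rw [show n+2 = (n+1)+1 from rfl, Nat.factorial_succ, Nat.factorial_succ]
    push_cast
    ring
  have hne : (Nat.factorial n : ℝ) ≠ 0 := by
    exact_mod_cast Nat.factorial_ne_zero n
  simp only [mul_div_assoc]
  rw [← Finset.sum_mul, hc, hfac]
  field_simp

lemma final0 (n : ℕ) :
    ∑ s ∈ range (n+1), (n.choose s : ℝ) * Beta ((s:ℝ) + 1) (((n:ℝ) + 1) - s + 1) = 1/2 := by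
  rw [Finset.sum_congr rfl (fun s hs => term0 n s (by simpa using Nat.lt_succ_iff.mp (mem_range.mp hs)))]
  apply final_aux
  have : ∀ s ∈ range (n+1), ((n+1-s : ℕ):ℝ) = ((n:ℝ)+1) - (s:ℝ) := by
    intro s hs
    have : s ≤ n + 1 := by have := mem_range.mp hs; omega
    push_cast [this]; ring
  rw [Finset.sum_congr rfl this, Finset.sum_sub_distrib, castGauss]
  simp [Finset.sum_const, card_range]
  ring

lemma final1 (n : ℕ) :
    ∑ s ∈ range (n+1), (n.choose s : ℝ)
      * Beta (((s+1:ℕ):ℝ) + 1) (((n:ℝ) + 1) - ((s+1:ℕ):ℝ) + 1) = 1/2 := by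
  rw [Finset.sum_congr rfl (fun s hs => term1 n s (by simpa using Nat.lt_succ_iff.mp (mem_range.mp hs)))]
  apply final_aux
  have : ∀ s ∈ range (n+1), ((s+1 : ℕ):ℝ) = (s:ℝ) + 1 := by intro s _; push_cast; ring
  rw [Finset.sum_congr rfl this, Finset.sum_add_distrib, castGauss]
  simp [Finset.sum_const, card_range]
  ring


/-- For each fixed index `k`, the marginal probabilities satisfy
`Pr(γₖᶻ = 0) = Pr(γₖᶻ = 1) = 1/2`. -/
theorem prior_marginal_z (p q : ℕ) (hq : 1 ≤ q) (k : Fin q) :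
    (∑ γ ∈ univ.filter (fun γ : (Fin p → Fin 3) × (Fin q → Fin 2) => γ.2 k = 0),
      prior p q γ = 1 / 2) ∧
    (∑ γ ∈ univ.filter (fun γ : (Fin p → Fin 3) × (Fin q → Fin 2) => γ.2 k = 1),
      prior p q γ = 1 / 2) := by
  obtain ⟨q', rfl⟩ : ∃ q', q = q' + 1 := ⟨q - 1, by omega⟩
  set n := p + q' with hn
  set g : ℕ → ℝ := fun s => Beta ((s:ℝ) + 1) ((n:ℝ) + 1 - (s:ℝ) + 1) with hg
  have hprior : ∀ (x : Fin p → Fin 3) (z : Fin (q'+1) → Fin 2),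
      prior p (q'+1) (x, z) = g (nActive x + ∑ j, (z j : ℕ)) / 2 ^ (nActive x) := by
    intro x z
    have e2 : (p:ℝ) + ((q'+1 : ℕ):ℝ) - ((gammaSize (x,z) : ℕ):ℝ) + 1
        = (n:ℝ) + 1 - ((gammaSize (x,z) : ℕ):ℝ) + 1 := by
      rw [hn]; push_cast; ring
    rw [prior, e2, hg]
    rfl
  have main : ∀ c : Fin 2,
      (∑ γ ∈ univ.filter (fun γ : (Fin p → Fin 3) × (Fin (q'+1) → Fin 2) => γ.2 k = c),
        prior p (q'+1) γ) = T n (fun m => g (m + (c:ℕ))) := by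
    intro c
    rw [Finset.sum_filter, Fintype.sum_prod_type]
    have hrw : ∀ x : Fin p → Fin 3,
        (∑ z : Fin (q'+1) → Fin 2, if z k = c then prior p (q'+1) (x, z) else 0)
          = (fun a => T q' (fun s => (fun m => g (m + (c:ℕ))) (a + s))) (nActive x)
              / 2 ^ (nActive x) := by
      intro x
      have hZ := Zsum_if q' k c (fun t => g (nActive x + t))
      calc ∑ z : Fin (q'+1) → Fin 2, (if z k = c then prior p (q'+1) (x, z) else 0)
          = ∑ z : Fin (q'+1) → Fin 2,
              (if z k = c then g (nActive x + ∑ j, (z j : ℕ)) else 0) / 2 ^ (nActive x) := by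
            apply Finset.sum_congr rfl
            intro z _
            rw [hprior x z]
            split <;> simp
        _ = (∑ z : Fin (q'+1) → Fin 2,
              (if z k = c then g (nActive x + ∑ j, (z j : ℕ)) else 0)) / 2 ^ (nActive x) := by
            rw [Finset.sum_div]
        _ = _ := by
            rw [hZ]
            congr 1
            apply T_congr
            intro s
            beta_reduce
            congr 1
            omega
    calc ∑ x : Fin p → Fin 3, ∑ z : Fin (q'+1) → Fin 2,
            (if (x, z).2 k = c then prior p (q'+1) (x, z) else 0)
        = ∑ x : Fin p → Fin 3,
            (fun a => T q' (fun s => (fun m => g (m + (c:ℕ))) (a + s))) (nActive x)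
              / 2 ^ (nActive x) := Finset.sum_congr rfl (fun x _ => hrw x)
      _ = T p (fun a => T q' (fun s => (fun m => g (m + (c:ℕ))) (a + s))) :=
            Xsum p (fun a => T q' (fun s => (fun m => g (m + (c:ℕ))) (a + s)))
      _ = T (p + q') (fun m => g (m + (c:ℕ))) :=
            T_comp p q' (fun m => g (m + (c:ℕ)))
  constructor
  · rw [main 0]
    have h0 : T n (fun m => g (m + ((0 : Fin 2) : ℕ))) = T n g := by
      apply T_congr; intro s; norm_num
    rw [h0]
    unfold T
    simp only [hg]
    exact final0 n
  · rw [main 1]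
    have h1 : T n (fun m => g (m + ((1 : Fin 2) : ℕ))) = T n (fun m => g (m + 1)) := by
      apply T_congr; intro s; norm_num
    rw [h1]
    unfold T
    simp only [hg]
    exact final1 n
end
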